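/- If E ⊆ G is extreme and some nonzero d ∈ G has exactly one representation d = x − y with x, y ∈ E, then we reach a contradiction; that is, any extreme set E has the property that every nonzero element of E − E has at least two representations as a difference of elements of E. -/

import Mathlib

open Complex Finset

/-- A finite subset `E` of a finite abelian group `G` is extreme if there is a
function supported on `E`, unimodular on `E`, with vanishing autocorrelation at
nonzero shifts. -/
def IsExtremeSet {G : Type*} [AddCommGroup G] [Fintype G] [DecidableEq G]
    (E : Finset G) : Prop :=
  ∃ f : G → ℂ,
    (∀ x ∈ E, ‖f x‖ = 1) ∧ (∀ x ∉ E, f x = 0) ∧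
    ∀ d : G, d ≠ 0 → ∑ x : G, f x * (starRingEnd ℂ) (f (x - d)) = 0

theorem extreme_set_differences_have_two_representations
    {G : Type*} [AddCommGroup G] [Fintype G] [DecidableEq G]
    (E : Finset G) (hext : IsExtremeSet E) :
    ∀ d : G, d ≠ 0 → ∀ x ∈ E, ∀ y ∈ E, x - y = d →
      ∃ x' ∈ E, ∃ y' ∈ E, x' - y' = d ∧ (x', y') ≠ (x, y) := by
  intro d hd x hx y hy hxy
  by_contra hcon
  push_neg at hcon
  obtain ⟨f, hf1, hf0, hcorr⟩ := hext
  have hsum := hcorr d hd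
  have hsingle : ∑ z : G, f z * (starRingEnd ℂ) (f (z - d)) =
      f x * (starRingEnd ℂ) (f (x - d)) := by
    apply Finset.sum_eq_single_of_mem x (Finset.mem_univ x)
    intro z _ hzx
    by_cases hz : z ∈ E
    · by_cases hz' : z - d ∈ E
      · exfalso
        have := hcon z hz (z - d) hz' (by abel)
        exact hzx (congrArg Prod.fst this)
      · rw [hf0 _ hz', map_zero, mul_zero]
    · rw [hf0 _ hz, zero_mul]
  rw [hsingle] at hsum
  have hxd : x - d = y := by rw [← hxy]; abel
  rw [hxd] at hsum
  rcases mul_eq_zero.mp hsum with h | h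
  · have := hf1 x hx; rw [h] at this; simp at this
  · have := hf1 y hy
    rw [show f y = 0 from by simpa using congrArg (starRingEnd ℂ) h] at this
    simp at this
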